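/- arXiv:2410.21110 — 2 statements merged into one kernel-verified Lean document; each statement's English description precedes it below -/
import Mathlib

section
/- Let X, Y₁, Y₂ be real random variables on a probability space (Ω, 𝒜, P) such that X is independent of Y₁ and X is independent of Y₂. Let a > 0 be a real number and let g₁ : ℝ → ℝ be a measurable function with g₁(x) > 0 for all x < a and such that g₁(X) is integrable. Assume that the CDFs satisfy P(Y₁ ≤ y) > P(Y₂ ≤ y) for every y > 0, and that P(X < a) > 0. Then E[g₁(X)·1_{X < a and Y₁ ≤ a − X}] > E[g₁(X)·1_{X < a and Y₂ ≤ a − X}]. -/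
open MeasureTheory ProbabilityTheory Set

lemma epo_aux {Ω : Type*} [MeasureSpace Ω] [IsProbabilityMeasure (ℙ : Measure Ω)]
    (X Y : Ω → ℝ) (hX : Measurable X) (hY : Measurable Y)
    (hI : IndepFun X Y) (a : ℝ) (g₁ : ℝ → ℝ) (hg₁m : Measurable g₁)
    (hint : Integrable (fun ω => g₁ (X ω))) :
    (∫ ω, (if X ω < a ∧ Y ω ≤ a - X ω then g₁ (X ω) else 0))
      = ∫ x, (if x < a then g₁ x * (ℙ {ω | Y ω ≤ a - x}).toReal else 0)
          ∂(Measure.map X ℙ) := by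
  set μ := Measure.map X ℙ with hμdef
  set ν := Measure.map Y ℙ with hνdef
  have hμ : IsProbabilityMeasure μ := Measure.isProbabilityMeasure_map hX.aemeasurable
  have hν : IsProbabilityMeasure ν := Measure.isProbabilityMeasure_map hY.aemeasurable
  set f : ℝ × ℝ → ℝ := fun p => if p.1 < a ∧ p.2 ≤ a - p.1 then g₁ p.1 else 0 with hfdef
  have hS : MeasurableSet {p : ℝ × ℝ | p.1 < a ∧ p.2 ≤ a - p.1} :=
    (measurableSet_lt measurable_fst measurable_const).inter
      (measurableSet_le measurable_snd (measurable_const.sub measurable_fst))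
  have hfm : Measurable f := Measurable.ite hS (hg₁m.comp measurable_fst) measurable_const
  have hmap : Measure.map (fun ω => (X ω, Y ω)) ℙ = μ.prod ν :=
    (indepFun_iff_map_prod_eq_prod_map_map hX.aemeasurable hY.aemeasurable).mp hI
  have hg₁μ : Integrable g₁ μ :=
    (integrable_map_measure hg₁m.aestronglyMeasurable hX.aemeasurable).mpr hint
  have hfst : Integrable (fun p : ℝ × ℝ => g₁ p.1) (μ.prod ν) := by
    have h1 : Integrable g₁ (Measure.map Prod.fst (μ.prod ν)) := by
      rw [Measure.map_fst_prod]
      simpa [measure_univ] using hg₁μ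
    exact h1.comp_measurable measurable_fst
  have hf_int : Integrable f (μ.prod ν) := by
    refine hfst.mono hfm.aestronglyMeasurable (ae_of_all _ fun p => ?_)
    by_cases h : p.1 < a ∧ p.2 ≤ a - p.1 <;> simp [hfdef, h, abs_nonneg]
  have step1 : (∫ ω, (if X ω < a ∧ Y ω ≤ a - X ω then g₁ (X ω) else 0))
      = ∫ p, f p ∂(μ.prod ν) := by
    rw [← hmap, integral_map (hX.prodMk hY).aemeasurable hfm.aestronglyMeasurable]
  rw [step1, integral_prod _ hf_int]
  refine integral_congr_ae (ae_of_all _ fun x => ?_)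
  by_cases hx : x < a
  · simp only [hfdef, hx, true_and, if_true]
    have : (fun y => if y ≤ a - x then g₁ x else 0)
        = (Iic (a - x)).indicator (fun _ => g₁ x) := by
      ext y; simp [indicator_apply, mem_Iic]
    rw [this, integral_indicator_const _ measurableSet_Iic]
    have hνI : ν (Iic (a - x)) = ℙ {ω | Y ω ≤ a - x} := by
      rw [hνdef, Measure.map_apply hY measurableSet_Iic]
      rfl
    rw [measureReal_def, hνI]
    simp [mul_comm]
  · simp [hfdef, hx]

/-- Part (i) of the auxiliary lemma: if the CDF of `Y₁` strictly dominates that of `Y₂` on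
the positive half-line, then the expectation of `g₁(X)` over the in-the-money region
`{X < a, Y ≤ a - X}` is strictly larger for `Y₁` than for `Y₂`. -/
theorem epo_lemma_itm {Ω : Type*} [MeasureSpace Ω] [IsProbabilityMeasure (ℙ : Measure Ω)]
    (X Y₁ Y₂ : Ω → ℝ) (hX : Measurable X) (hY₁ : Measurable Y₁) (hY₂ : Measurable Y₂)
    (hI₁ : IndepFun X Y₁) (hI₂ : IndepFun X Y₂)
    (a : ℝ) (ha : 0 < a) (g₁ : ℝ → ℝ) (hg₁m : Measurable g₁)
    (hg₁pos : ∀ x < a, 0 < g₁ x)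
    (hint : Integrable (fun ω => g₁ (X ω)))
    (hcdf : ∀ y > 0, ℙ {ω | Y₂ ω ≤ y} < ℙ {ω | Y₁ ω ≤ y})
    (hXa : 0 < ℙ {ω | X ω < a}) :
    (∫ ω, (if X ω < a ∧ Y₂ ω ≤ a - X ω then g₁ (X ω) else 0)) <
      ∫ ω, (if X ω < a ∧ Y₁ ω ≤ a - X ω then g₁ (X ω) else 0) := by
  set μ := Measure.map X ℙ with hμdef
  have hμ : IsProbabilityMeasure μ := Measure.isProbabilityMeasure_map hX.aemeasurable
  have hg₁μ : Integrable g₁ μ :=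
    (integrable_map_measure hg₁m.aestronglyMeasurable hX.aemeasurable).mpr hint
  -- the two transformed integrands
  set F : (Ω → ℝ) → ℝ → ℝ :=
    fun Y x => if x < a then g₁ x * (ℙ {ω | Y ω ≤ a - x}).toReal else 0 with hFdef
  have hFm : ∀ Y : Ω → ℝ, Measurable Y → Measurable (F Y) := by
    intro Y hY
    have hc : Measurable fun t : ℝ => ℙ {ω | Y ω ≤ t} := by
      have hmono : Monotone fun t : ℝ => ℙ {ω | Y ω ≤ t} := by
        intro s t hst
        exact measure_mono fun ω hω => le_trans hω hst
      exact hmono.measurable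
    exact Measurable.ite measurableSet_Iio
      (hg₁m.mul (ENNReal.measurable_toReal.comp (hc.comp (measurable_const.sub measurable_id))))
      measurable_const
  have hFint : ∀ Y : Ω → ℝ, Measurable Y → Integrable (F Y) μ := by
    intro Y hY
    refine hg₁μ.mono ((hFm Y hY).aestronglyMeasurable) (ae_of_all _ fun x => ?_)
    by_cases hx : x < a
    · simp only [hFdef, hx, if_true, Real.norm_eq_abs, abs_mul]
      have h1 : |(ℙ {ω | Y ω ≤ a - x}).toReal| ≤ 1 := by
        rw [abs_of_nonneg ENNReal.toReal_nonneg]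
        exact ENNReal.toReal_le_of_le_ofReal one_pos.le (by simpa using prob_le_one)
      calc |g₁ x| * |(ℙ {ω | Y ω ≤ a - x}).toReal| ≤ |g₁ x| * 1 :=
            mul_le_mul_of_nonneg_left h1 (abs_nonneg _)
        _ = |g₁ x| := mul_one _
    · simp [hFdef, hx, abs_nonneg]
  have h1 := epo_aux X Y₁ hX hY₁ hI₁ a g₁ hg₁m hint
  have h2 := epo_aux X Y₂ hX hY₂ hI₂ a g₁ hg₁m hint
  rw [h1, h2]
  have hF1 := hFint Y₁ hY₁
  have hF2 := hFint Y₂ hY₂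
  have hnonneg : 0 ≤ fun x => F Y₁ x - F Y₂ x := by
    intro x
    by_cases hx : x < a
    · simp only [hFdef, hx, if_true, Pi.zero_apply]
      have hle : (ℙ {ω | Y₂ ω ≤ a - x}).toReal ≤ (ℙ {ω | Y₁ ω ≤ a - x}).toReal :=
        (ENNReal.toReal_le_toReal (measure_ne_top _ _) (measure_ne_top _ _)).mpr
          (hcdf (a - x) (by linarith)).le
      nlinarith [hg₁pos x hx]
    · simp [hFdef, hx]
  have hpos : ∀ x < a, 0 < F Y₁ x - F Y₂ x := by
    intro x hx
    simp only [hFdef, hx, if_true]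
    have hlt : (ℙ {ω | Y₂ ω ≤ a - x}).toReal < (ℙ {ω | Y₁ ω ≤ a - x}).toReal :=
      (ENNReal.toReal_lt_toReal (measure_ne_top _ _) (measure_ne_top _ _)).mpr
        (hcdf (a - x) (by linarith))
    nlinarith [hg₁pos x hx]
  have hsupp : Iio a ⊆ Function.support fun x => F Y₁ x - F Y₂ x := by
    intro x hx
    exact ne_of_gt (hpos x hx)
  have hμIio : 0 < μ (Iio a) := by
    rw [hμdef, Measure.map_apply hX measurableSet_Iio]
    exact hXa
  have hint0 : 0 < ∫ x, (F Y₁ x - F Y₂ x) ∂μ := by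
    refine (integral_pos_iff_support_of_nonneg_ae (ae_of_all _ fun x => hnonneg x)
      (hF1.sub hF2)).mpr ?_
    exact lt_of_lt_of_le hμIio (measure_mono hsupp)
  rw [integral_sub hF1 hF2] at hint0
  linarith
end

section
/- Let X, Y₁, Y₂ be real random variables on a probability space (Ω, 𝒜, P) such that X is independent of Y₁ and X is independent of Y₂. Let a > 0 be a real number and let g₂ : ℝ → ℝ be a measurable function with g₂(x) > 0 for all x > a and such that g₂(X) is integrable. Assume that the CDFs satisfy P(Y₁ ≤ y) < P(Y₂ ≤ y) for every y < 0, and that P(X > a) > 0. Then E[g₂(X)·1_{X > a and Y₁ ≤ a − X}] < E[g₂(X)·1_{X > a and Y₂ ≤ a − X}]. -/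
open MeasureTheory ProbabilityTheory

/-- Part (ii) of the auxiliary lemma: if the CDF of `Y₁` is strictly below that of `Y₂` on
the negative half-line, then the expectation of `g₂(X)` over the out-of-the-money region
`{X > a, Y ≤ a - X}` is strictly smaller for `Y₁` than for `Y₂`. -/
theorem epo_lemma_otm {Ω : Type*} [MeasureSpace Ω] [IsProbabilityMeasure (ℙ : Measure Ω)]
    (X Y₁ Y₂ : Ω → ℝ) (hX : Measurable X) (hY₁ : Measurable Y₁) (hY₂ : Measurable Y₂)
    (hI₁ : IndepFun X Y₁) (hI₂ : IndepFun X Y₂)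
    (a : ℝ) (ha : 0 < a) (g₂ : ℝ → ℝ) (hg₂m : Measurable g₂)
    (hg₂pos : ∀ x, a < x → 0 < g₂ x)
    (hint : Integrable (fun ω => g₂ (X ω)))
    (hcdf : ∀ y < 0, ℙ {ω | Y₁ ω ≤ y} < ℙ {ω | Y₂ ω ≤ y})
    (hXa : 0 < ℙ {ω | a < X ω}) :
    (∫ ω, (if a < X ω ∧ Y₁ ω ≤ a - X ω then g₂ (X ω) else 0)) <
      ∫ ω, (if a < X ω ∧ Y₂ ω ≤ a - X ω then g₂ (X ω) else 0) := by
  set μ : Measure ℝ := Measure.map X ℙ with hμdef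
  have hμprob : IsProbabilityMeasure μ := Measure.isProbabilityMeasure_map hX.aemeasurable
  have hgint : Integrable g₂ μ := by
    rw [hμdef, integrable_map_measure hg₂m.aestronglyMeasurable hX.aemeasurable]
    exact hint
  -- measurability of CDF-type functions
  have hcdfm : ∀ (ν : Measure ℝ), Measurable fun x : ℝ => (ν (Set.Iic (a - x))).toReal := by
    intro ν
    have h1 : Monotone fun t : ℝ => ν (Set.Iic t) := fun s t hst =>
      measure_mono (Set.Iic_subset_Iic.mpr hst)
    exact (h1.measurable.comp (measurable_const.sub measurable_id)).ennreal_toReal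
  -- the key reduction via independence
  have key : ∀ (Y : Ω → ℝ), Measurable Y → IndepFun X Y →
      (∫ ω, (if a < X ω ∧ Y ω ≤ a - X ω then g₂ (X ω) else 0)) =
      ∫ x, (if a < x then g₂ x * ((Measure.map Y ℙ) (Set.Iic (a - x))).toReal else 0) ∂μ := by
    intro Y hY hI
    set ν : Measure ℝ := Measure.map Y ℙ with hνdef
    have hνprob : IsProbabilityMeasure ν := Measure.isProbabilityMeasure_map hY.aemeasurable
    have hprod : Measure.map (fun ω => (X ω, Y ω)) ℙ = μ.prod ν :=
      (indepFun_iff_map_prod_eq_prod_map_map hX.aemeasurable hY.aemeasurable).mp hI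
    set f : ℝ × ℝ → ℝ := fun p => if a < p.1 ∧ p.2 ≤ a - p.1 then g₂ p.1 else 0 with hfdef
    have hfm : Measurable f := by
      apply Measurable.ite _ (hg₂m.comp measurable_fst) measurable_const
      exact (measurableSet_lt measurable_const measurable_fst).inter
        (measurableSet_le measurable_snd (measurable_const.sub measurable_fst))
    have hbound : Integrable (fun p : ℝ × ℝ => g₂ p.1 * (1 : ℝ)) (μ.prod ν) :=
      hgint.mul_prod (integrable_const 1)
    have hfint : Integrable f (μ.prod ν) := by
      refine Integrable.mono hbound hfm.aestronglyMeasurable (Filter.Eventually.of_forall ?_)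
      intro p
      simp only [hfdef, mul_one, Real.norm_eq_abs]
      split_ifs with h
      · exact le_rfl
      · simpa using abs_nonneg (g₂ p.1)
    have h1 : (∫ ω, (if a < X ω ∧ Y ω ≤ a - X ω then g₂ (X ω) else 0)) =
        ∫ p, f p ∂(Measure.map (fun ω => (X ω, Y ω)) ℙ) := by
      rw [integral_map (hX.prodMk hY).aemeasurable hfm.aestronglyMeasurable]
    rw [h1, hprod, integral_prod f hfint]
    refine integral_congr_ae (Filter.Eventually.of_forall fun x => ?_)
    by_cases hx : a < x
    · have : (fun y => f (x, y)) =
          fun y => Set.indicator (Set.Iic (a - x)) (fun _ => g₂ x) y := by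
        funext y
        simp only [hfdef, Set.indicator, Set.mem_Iic, hx, true_and]
      simp only []
      rw [this, integral_indicator_const _ measurableSet_Iic, if_pos hx]
      simp [smul_eq_mul, mul_comm, measureReal_def]
    · simp only [hfdef, hx, false_and, if_false, integral_zero]
  -- define the two integrands on ℝ
  set ν₁ : Measure ℝ := Measure.map Y₁ ℙ with hν₁def
  set ν₂ : Measure ℝ := Measure.map Y₂ ℙ with hν₂def
  have hν₁prob : IsProbabilityMeasure ν₁ := Measure.isProbabilityMeasure_map hY₁.aemeasurable
  have hν₂prob : IsProbabilityMeasure ν₂ := Measure.isProbabilityMeasure_map hY₂.aemeasurable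
  set h₁ : ℝ → ℝ := fun x => if a < x then g₂ x * (ν₁ (Set.Iic (a - x))).toReal else 0 with hh₁
  set h₂ : ℝ → ℝ := fun x => if a < x then g₂ x * (ν₂ (Set.Iic (a - x))).toReal else 0 with hh₂
  have hmeas : ∀ (ν : Measure ℝ),
      Measurable fun x => if a < x then g₂ x * (ν (Set.Iic (a - x))).toReal else 0 := by
    intro ν
    exact Measurable.ite measurableSet_Ioi (hg₂m.mul (hcdfm ν)) measurable_const
  have hintegrable : ∀ (ν : Measure ℝ) (_ : IsProbabilityMeasure ν),
      Integrable (fun x => if a < x then g₂ x * (ν (Set.Iic (a - x))).toReal else 0) μ := by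
    intro ν hνp
    refine Integrable.mono hgint (hmeas ν).aestronglyMeasurable
      (Filter.Eventually.of_forall fun x => ?_)
    simp only [Real.norm_eq_abs]
    split_ifs with h
    · rw [abs_mul]
      have h01 : (ν (Set.Iic (a - x))).toReal ≤ 1 := by
        have := prob_le_one (μ := ν) (s := Set.Iic (a - x))
        exact ENNReal.toReal_le_of_le_ofReal zero_le_one (by simpa using this)
      have : |(ν (Set.Iic (a - x))).toReal| ≤ 1 := by
        rw [abs_of_nonneg ENNReal.toReal_nonneg]; exact h01
      calc |g₂ x| * |(ν (Set.Iic (a - x))).toReal| ≤ |g₂ x| * 1 :=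
            mul_le_mul_of_nonneg_left this (abs_nonneg _)
        _ = |g₂ x| := mul_one _
    · simpa using abs_nonneg (g₂ x)
  have h₁int : Integrable h₁ μ := hintegrable ν₁ hν₁prob
  have h₂int : Integrable h₂ μ := hintegrable ν₂ hν₂prob
  -- translate the CDF hypothesis
  have hcdf' : ∀ y < (0 : ℝ), ν₁ (Set.Iic y) < ν₂ (Set.Iic y) := by
    intro y hy
    have e₁ : ν₁ (Set.Iic y) = ℙ {ω | Y₁ ω ≤ y} := by
      rw [hν₁def, Measure.map_apply hY₁ measurableSet_Iic]; rfl
    have e₂ : ν₂ (Set.Iic y) = ℙ {ω | Y₂ ω ≤ y} := by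
      rw [hν₂def, Measure.map_apply hY₂ measurableSet_Iic]; rfl
    rw [e₁, e₂]; exact hcdf y hy
  rw [key Y₁ hY₁ hI₁, key Y₂ hY₂ hI₂, ← sub_pos, ← integral_sub h₂int h₁int]
  have hnn : 0 ≤ fun x => h₂ x - h₁ x := by
    intro x
    simp only [hh₁, hh₂, Pi.zero_apply]
    split_ifs with h
    · rw [← mul_sub]
      apply mul_nonneg (hg₂pos x h).le
      rw [sub_nonneg]
      exact ENNReal.toReal_le_toReal (measure_ne_top ν₁ _) (measure_ne_top ν₂ _) |>.mpr
        (hcdf' (a - x) (by linarith)).le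
    · simp
  rw [integral_pos_iff_support_of_nonneg hnn (h₂int.sub h₁int)]
  have hsub : Set.Ioi a ⊆ Function.support fun x => h₂ x - h₁ x := by
    intro x hx
    have hx' : a < x := hx
    simp only [Function.mem_support, hh₁, hh₂, if_pos hx']
    rw [← mul_sub]
    have hlt : (ν₁ (Set.Iic (a - x))).toReal < (ν₂ (Set.Iic (a - x))).toReal :=
      (ENNReal.toReal_lt_toReal (measure_ne_top ν₁ _) (measure_ne_top ν₂ _)).mpr
        (hcdf' (a - x) (by linarith))
    exact ne_of_gt (mul_pos (hg₂pos x hx') (by linarith))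
  have hμIoi : 0 < μ (Set.Ioi a) := by
    rw [hμdef, Measure.map_apply hX measurableSet_Ioi]
    exact hXa
  exact lt_of_lt_of_le hμIoi (measure_mono hsub)
end
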